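/- Every extreme point u of the closed unit ball of a unital C*-algebra A is a partial isometry (u u* u = u) satisfying (1 − u u*) · a · (1 − u* u) = 0 for all a ∈ A. -/

import Mathlib

/-- Every extreme point `u` of the closed unit ball of a unital C*-algebra is a partial
isometry satisfying `(1 - u u*) a (1 - u* u) = 0` for all `a`. -/
theorem extreme_point_unit_ball_partial_isometry
    {A : Type*} [CStarAlgebra A] (u : A)
    (hu : u ∈ Set.extremePoints ℝ {a : A | ‖a‖ ≤ 1}) :
    u * star u * u = u ∧ ∀ a : A, (1 - u * star u) * a * (1 - star u * u) = 0 := by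
  letI := CStarAlgebra.spectralOrder A
  haveI := CStarAlgebra.spectralOrderedRing A
  obtain ⟨huball, hext⟩ := hu
  have hu1 : ‖u‖ ≤ 1 := huball
  -- helper: nonneg real smul of nonneg is nonneg
  have rsmul_nonneg : ∀ {r : ℝ}, 0 ≤ r → ∀ {x : A}, 0 ≤ x → 0 ≤ r • x := by
    intro r hr x hx
    have h1 := star_left_conjugate_nonneg hx (Real.sqrt r • (1:A))
    have h2 : star (Real.sqrt r • (1:A)) * x * (Real.sqrt r • (1:A)) = r • x := by
      simp [star_smul, smul_mul_assoc, mul_smul_comm, smul_smul, Real.mul_self_sqrt hr]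
    rwa [h2] at h1
  -- helper: star x * x ≤ 1 → ‖x‖ ≤ 1
  have norm_le_of : ∀ x : A, star x * x ≤ 1 → ‖x‖ ≤ 1 := by
    intro x hx
    have h1 : ‖star x * x‖ ≤ 1 :=
      (CStarAlgebra.norm_le_one_iff_of_nonneg _ (star_mul_self_nonneg x)).mpr hx
    rw [CStarRing.norm_star_mul_self] at h1
    nlinarith [norm_nonneg x]
  -- helper: extreme point property
  have key : ∀ z : A, ‖u + z‖ ≤ 1 → ‖u - z‖ ≤ 1 → z = 0 := by
    intro z h1 h2
    have hseg : u ∈ openSegment ℝ (u + z) (u - z) :=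
      ⟨1/2, 1/2, by norm_num, by norm_num, by norm_num, by module⟩
    have := (hext h1 h2 hseg)
    have : z = 0 := by
      have := congrArg (· - u) this
      simpa using this
    exact this
  set h : A := star u * u with hdef
  have hh0 : (0:A) ≤ h := star_mul_self_nonneg u
  have hhsa : IsSelfAdjoint h := IsSelfAdjoint.star_mul_self u
  have hhn : ‖h‖ ≤ 1 := by
    rw [hdef, CStarRing.norm_star_mul_self]; nlinarith [norm_nonneg u]
  have hh1 : h ≤ 1 := (CStarAlgebra.norm_le_one_iff_of_nonneg h hh0).mp hhn
  have h1h : (0:A) ≤ 1 - h := sub_nonneg.mpr hh1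
  -- Part 1
  have part1 : u * star u * u = u := by
    set z : A := (1/2:ℝ) • (u * (1 - h)) with zdef
    have hz : z = 0 := by
      apply key
      · -- ‖u + z‖ ≤ 1
        have hx : u + z = u * ((1:A) + (1/2:ℝ)•((1:A)-h)) := by
          rw [zdef]; simp [mul_add, mul_smul_comm]
        rw [hx]
        apply norm_le_of
        have hstar : star (u * ((1:A) + (1/2:ℝ)•((1:A)-h))) =
            ((1:A) + (1/2:ℝ)•((1:A)-h)) * star u := by
          simp [star_smul, star_sub, hhsa.star_eq, star_add]
        rw [hstar]
        have hrw : ((1:A) + (1/2:ℝ)•((1:A)-h)) * star u * (u * ((1:A) + (1/2:ℝ)•((1:A)-h)))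
            = ((1:A) + (1/2:ℝ)•((1:A)-h)) * h * ((1:A) + (1/2:ℝ)•((1:A)-h)) := by
          rw [hdef]; noncomm_ring
        rw [hrw, ← sub_nonneg]
        have hid : (1:A) - ((1:A) + (1/2:ℝ)•((1:A)-h)) * h * ((1:A) + (1/2:ℝ)•((1:A)-h))
            = ((1:A)-h) * ((1/4:ℝ)•((4:ℝ)•(1:A)-h)) * ((1:A)-h) := by
          simp only [smul_mul_assoc, mul_smul_comm, smul_smul, smul_sub, smul_add, sub_mul,
            mul_sub, add_mul, mul_add, mul_one, one_mul, mul_assoc]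
          module
        rw [hid]
        have hmid : (0:A) ≤ (1/4:ℝ)•((4:ℝ)•(1:A)-h) := by
          apply rsmul_nonneg (by norm_num)
          have hone : (0:A) ≤ 1 := by simpa using star_mul_self_nonneg (1:A)
          have : (4:ℝ)•(1:A) - h = ((1:A) - h) + ((1:A) + ((1:A) + (1:A))) := by module
          rw [this]
          exact add_nonneg h1h (add_nonneg hone (add_nonneg hone hone))
        have := star_left_conjugate_nonneg hmid ((1:A)-h)
        rwa [(show star ((1:A)-h) = (1:A)-h by simp [hhsa.star_eq])] at this
      · -- ‖u - z‖ ≤ 1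
        have hx : u - z = u * ((1:A) - (1/2:ℝ)•((1:A)-h)) := by
          rw [zdef]; simp [mul_sub, mul_smul_comm]
        rw [hx]
        apply norm_le_of
        have hstar : star (u * ((1:A) - (1/2:ℝ)•((1:A)-h))) =
            ((1:A) - (1/2:ℝ)•((1:A)-h)) * star u := by
          simp [star_smul, star_sub, hhsa.star_eq]
        rw [hstar]
        have hrw : ((1:A) - (1/2:ℝ)•((1:A)-h)) * star u * (u * ((1:A) - (1/2:ℝ)•((1:A)-h)))
            = ((1:A) - (1/2:ℝ)•((1:A)-h)) * h * ((1:A) - (1/2:ℝ)•((1:A)-h)) := by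
          rw [hdef]; noncomm_ring
        rw [hrw, ← sub_nonneg]
        have hid : (1:A) - ((1:A) - (1/2:ℝ)•((1:A)-h)) * h * ((1:A) - (1/2:ℝ)•((1:A)-h))
            = (1/4:ℝ)•((h + (3/2:ℝ)•(1:A)) * ((1:A)-h) * (h + (3/2:ℝ)•(1:A)))
              + (7/16:ℝ)•((1:A)-h) := by
          simp only [smul_mul_assoc, mul_smul_comm, smul_smul, smul_sub, smul_add, sub_mul,
            mul_sub, add_mul, mul_add, mul_one, one_mul, mul_assoc]
          module
        rw [hid]
        apply add_nonneg
        · apply rsmul_nonneg (by norm_num)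
          have hc := star_left_conjugate_nonneg h1h (h + (3/2:ℝ)•(1:A))
          rwa [(show star (h + (3/2:ℝ)•(1:A)) = h + (3/2:ℝ)•(1:A) by
            simp [star_add, star_smul, hhsa.star_eq])] at hc
        · exact rsmul_nonneg (by norm_num) h1h
    -- z = 0 gives u * h = u
    have huh : u * (1 - h) = 0 := by
      have := hz
      rw [zdef, smul_eq_zero] at this
      rcases this with h' | h'
      · norm_num at h'
      · exact h'
    have : u * h = u := by
      have := huh
      rw [mul_sub, mul_one, sub_eq_zero] at this
      exact this.symm
    rw [hdef, ← mul_assoc] at this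
    exact this

  refine ⟨part1, ?_⟩
  -- Part 2
  obtain ⟨p, pdef⟩ : ∃ p : A, p = u * star u := ⟨_, rfl⟩
  have hpsa : star p = p := by rw [pdef]; exact (IsSelfAdjoint.mul_star_self u).star_eq
  have hp0 : (0:A) ≤ p := by rw [pdef]; exact mul_star_self_nonneg u
  have hpn : ‖p‖ ≤ 1 := by
    rw [pdef, CStarRing.norm_self_mul_star]; nlinarith [norm_nonneg u]
  have hp1 : p ≤ 1 := (CStarAlgebra.norm_le_one_iff_of_nonneg p hp0).mp hpn
  have hq2 : h * h = h := by
    calc h * h = star u * (u * star u * u) := by rw [hdef]; noncomm_ring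
    _ = star u * u := by rw [part1]
    _ = h := hdef.symm
  have hpp : p * p = p := by
    calc p * p = u * star u * u * star u := by rw [pdef]; noncomm_ring
    _ = u * star u := by rw [part1]
    _ = p := pdef.symm
  have hup : star u * p = star u := by
    have h2 : star u * (u * star u) = star u := by
      simpa [star_mul, star_star, mul_assoc] using congrArg star part1
    rw [pdef]; exact h2
  have hstaru : star u * (1 - p) = 0 := by
    rw [mul_sub, mul_one, hup, sub_self]
  -- main claim for norm-bounded a
  have main : ∀ a : A, ‖a‖ ≤ 1 → (1 - p) * a * (1 - h) = 0 := by
    intro a ha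
    obtain ⟨b, bdef⟩ : ∃ b : A, b = (1 - p) * a * (1 - h) := ⟨_, rfl⟩
    rw [← bdef]
    have hub : star u * b = 0 := by
      rw [bdef, ← mul_assoc, ← mul_assoc, hstaru, zero_mul, zero_mul]
    have hbu : star b * u = 0 := by
      have h2 := congrArg star hub
      simpa [star_mul, star_star] using h2
    have hbsplit : ∀ s : ℝ, star (u + s • b) * (u + s • b) = h + (s*s) • (star b * b) := by
      intro s
      have hexp : star (u + s • b) * (u + s • b)
          = star u * u + s • (star u * b) + s • (star b * u) + (s*s) • (star b * b) := by
        simp only [star_add, star_smul, star_trivial, add_mul, mul_add, smul_add,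
          smul_mul_assoc, mul_smul_comm, smul_smul]
        abel
      rw [hexp, hub, hbu, ← hdef]
      simp only [smul_zero, add_zero]
    have hbb : star b * b ≤ 1 - h := by
      have hsb : star b = (1 - h) * star a * (1 - p) := by
        simp only [bdef, star_mul, star_sub, star_one, hpsa, hhsa.star_eq, mul_assoc]
      have h1p : (1 - p) * (1 - p) = 1 - p := by
        simp only [sub_mul, mul_sub, one_mul, mul_one, hpp]; abel
      have hexp2 : star b * b = (1 - h) * (star a * (1 - p) * a) * (1 - h) := by
        rw [hsb, bdef]
        calc (1 - h) * star a * (1 - p) * ((1 - p) * a * (1 - h))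
            = (1 - h) * star a * ((1 - p) * (1 - p)) * a * (1 - h) := by noncomm_ring
          _ = (1 - h) * star a * (1 - p) * a * (1 - h) := by rw [h1p]
          _ = (1 - h) * (star a * (1 - p) * a) * (1 - h) := by noncomm_ring
      have hc0 : (0:A) ≤ star a * (1 - p) * a := star_left_conjugate_nonneg (sub_nonneg.mpr hp1) a
      have hcn : ‖star a * (1 - p) * a‖ ≤ 1 := by
        have h1pn : ‖(1:A) - p‖ ≤ 1 := by
          rw [CStarAlgebra.norm_le_one_iff_of_nonneg _ (sub_nonneg.mpr hp1)]
          exact sub_le_self _ hp0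
        have hsa : ‖star a‖ ≤ 1 := by rwa [norm_star]
        calc ‖star a * (1 - p) * a‖ ≤ ‖star a * (1 - p)‖ * ‖a‖ := norm_mul_le _ _
          _ ≤ ‖star a‖ * ‖(1:A) - p‖ * ‖a‖ := by
              gcongr
              exact norm_mul_le _ _
          _ ≤ 1 * 1 * 1 := by gcongr
          _ = 1 := by norm_num
      have hc1 : star a * (1 - p) * a ≤ 1 :=
        (CStarAlgebra.norm_le_one_iff_of_nonneg _ hc0).mp hcn
      have hconj := star_left_conjugate_le_conjugate hc1 ((1:A) - h)
      rw [(show star ((1:A)-h) = (1:A)-h by simp [hhsa.star_eq])] at hconj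
      calc star b * b = (1-h) * (star a * (1-p) * a) * (1-h) := hexp2
        _ ≤ (1-h) * 1 * (1-h) := hconj
        _ = 1 - h := by
            simp only [mul_one, sub_mul, mul_sub, one_mul, hq2]; abel
    have hble : ∀ s : ℝ, s*s = 1 → ‖u + s • b‖ ≤ 1 := by
      intro s hs
      apply norm_le_of
      rw [hbsplit s, hs, one_smul]
      calc h + star b * b ≤ h + (1 - h) := add_le_add_right hbb h
        _ = 1 := by abel
    have hb1 : ‖u + (1:ℝ) • b‖ ≤ 1 := hble 1 (by norm_num)
    have hb2 : ‖u - (1:ℝ) • b‖ ≤ 1 := by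
      have h2 := hble (-1) (by norm_num)
      rwa [(show u + (-1:ℝ) • b = u - (1:ℝ) • b by module)] at h2
    have := key ((1:ℝ) • b) hb1 hb2
    simpa using this
  -- general a
  intro a
  rw [← pdef]
  rcases eq_or_ne a 0 with rfl | ha
  · simp
  · have hn : (0:ℝ) < ‖a‖ := norm_pos_iff.mpr ha
    have h1 : ‖(‖a‖⁻¹ • a)‖ ≤ 1 := by
      rw [norm_smul, Real.norm_eq_abs, abs_of_pos (inv_pos.mpr hn),
        inv_mul_cancel₀ hn.ne']
    have h2 := main (‖a‖⁻¹ • a) h1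
    have h3 : (1 - p) * a * (1 - h) = ‖a‖ • ((1 - p) * (‖a‖⁻¹ • a) * (1 - h)) := by
      rw [mul_smul_comm, smul_mul_assoc, smul_smul, mul_inv_cancel₀ hn.ne', one_smul]
    rw [h3, h2, smul_zero]
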